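/- Let M be a free abelian group of finite rank. Let V, V' be subgroups of M that are commensurable (i.e. V∩V' has finite index in both V and V'), let φ : V → W and φ' : V' → W' be group isomorphisms onto subgroups W, W' of M, and assume that φ and φ' agree on V∩V'. Then D_φ = D_{φ'} and φ̃ = φ̃'. -/

import Mathlib

/-!
Setting: `M = ℤ^n` is a free abelian group of finite rank, `V, W` are subgroups of `M`,
and `φ : V ≃+ W` is a group isomorphism.  Inside `M ⊗ ℚ = ℚ^n`, a subgroup `U` of `M`
is identified with the `ℚ`-subspace `U ⊗ ℚ` spanned by its image, and `φ_ℚ` denotes the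
unique `ℚ`-linear extension of `φ` to `V ⊗ ℚ`.
-/

/-- The canonical embedding of `ℤ^n` into `ℚ^n` (i.e. `M → M ⊗ ℚ`). -/
def embQ (n : ℕ) (x : Fin n → ℤ) : Fin n → ℚ := fun i => (x i : ℚ)

/-- `U ⊗ ℚ`, the `ℚ`-subspace of `ℚ^n` spanned by the image of a subgroup `U` of `ℤ^n`. -/
def qSpan (n : ℕ) (U : AddSubgroup (Fin n → ℤ)) : Submodule ℚ (Fin n → ℚ) :=
  Submodule.span ℚ (embQ n '' (U : Set (Fin n → ℤ)))

/-- `RelQ V W φ x y` expresses that `x ∈ V ⊗ ℚ` and `φ_ℚ (x) = y`, where `φ_ℚ` is the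
unique `ℚ`-linear extension of `φ : V ≃+ W`: there is a nonzero integer `p` clearing the
denominators of `x`, with `p • x ∈ V` and `φ (p • x) = p • y`. -/
def RelQ {n : ℕ} (V W : AddSubgroup (Fin n → ℤ)) (φ : V ≃+ W)
    (x y : Fin n → ℚ) : Prop :=
  ∃ p : ℤ, p ≠ 0 ∧ ∃ v : V, embQ n (v : Fin n → ℤ) = p • x ∧
    embQ n ((φ v : W) : Fin n → ℤ) = p • y

/-- `D_φ`: the set of `x ∈ (V ∩ W) ⊗ ℚ` admitting a full backward orbit
`(x_k)_{k ≥ 0}` under `φ_ℚ` inside `(V ∩ W) ⊗ ℚ`, i.e. `x_0 = x` and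
`φ_ℚ (x_{k+1}) = x_k` for all `k`. -/
def DSet {n : ℕ} (V W : AddSubgroup (Fin n → ℤ)) (φ : V ≃+ W) : Set (Fin n → ℚ) :=
  {x | ∃ xs : ℕ → (Fin n → ℚ), xs 0 = x ∧ (∀ k, xs k ∈ qSpan n (V ⊓ W)) ∧
      ∀ k, RelQ V W φ (xs (k + 1)) (xs k)}



lemma embQ_zsmul (n : ℕ) (m : ℤ) (u : Fin n → ℤ) :
    embQ n (m • u) = (m : ℚ) • embQ n u := by
  funext i
  simp [embQ, Pi.smul_apply, zsmul_eq_mul]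

lemma mult_mem {n : ℕ} {H K : AddSubgroup (Fin n → ℤ)} (h : H.relIndex K ≠ 0)
    {v : Fin n → ℤ} (hv : v ∈ K) : ∃ m : ℤ, m ≠ 0 ∧ m • v ∈ H := by
  have hm := (H.addSubgroupOf K).nsmul_index_mem (⟨v, hv⟩ : K)
  refine ⟨(H.relIndex K : ℤ), by exact_mod_cast h, ?_⟩
  have : ((H.relIndex K • (⟨v, hv⟩ : K) : K) : Fin n → ℤ) ∈ H := hm
  simpa [AddSubgroup.relIndex, natCast_zsmul] using this

section aux
variable {n : ℕ} {V W V' W' : AddSubgroup (Fin n → ℤ)}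
  {φ : V ≃+ W} {φ' : V' ≃+ W'}

lemma rel_imp (hVfin : (V ⊓ V').relIndex V ≠ 0)
    (hagree : ∀ (v : Fin n → ℤ) (hv : v ∈ V) (hv' : v ∈ V'),
      ((φ ⟨v, hv⟩ : W) : Fin n → ℤ) = ((φ' ⟨v, hv'⟩ : W') : Fin n → ℤ))
    {x y : Fin n → ℚ} (h : RelQ V W φ x y) : RelQ V' W' φ' x y := by
  obtain ⟨p, hp, v, hvx, hvy⟩ := h
  obtain ⟨m, hm, hmv⟩ := mult_mem hVfin v.2
  have hmvV : m • (v : Fin n → ℤ) ∈ V := hmv.1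
  have hmvV' : m • (v : Fin n → ℤ) ∈ V' := hmv.2
  refine ⟨m * p, mul_ne_zero hm hp, ⟨m • (v : Fin n → ℤ), hmvV'⟩, ?_, ?_⟩
  · rw [embQ_zsmul, hvx, mul_smul, Int.cast_smul_eq_zsmul]
  · have h1 : (⟨m • (v : Fin n → ℤ), hmvV⟩ : V) = m • v := rfl
    have hz : φ (m • v) = m • φ v := AddMonoidHom.map_zsmul φ.toAddMonoidHom m v
    have h2 : ((φ' ⟨m • (v : Fin n → ℤ), hmvV'⟩ : W') : Fin n → ℤ)
        = m • ((φ v : W) : Fin n → ℤ) := by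
      rw [← hagree _ hmvV hmvV', h1, hz]
      rfl
    rw [h2, embQ_zsmul, hvy, mul_smul, Int.cast_smul_eq_zsmul]

lemma span_imp (hVfin : (V ⊓ V').relIndex V ≠ 0)
    (hagree : ∀ (v : Fin n → ℤ) (hv : v ∈ V) (hv' : v ∈ V'),
      ((φ ⟨v, hv⟩ : W) : Fin n → ℤ) = ((φ' ⟨v, hv'⟩ : W') : Fin n → ℤ)) :
    qSpan n (V ⊓ W) ≤ qSpan n (V' ⊓ W') := by
  rw [qSpan, Submodule.span_le]
  rintro _ ⟨u, hu, rfl⟩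
  obtain ⟨huV, huW⟩ := hu
  -- multiple of u in V'
  obtain ⟨m, hm, hmu⟩ := mult_mem hVfin huV
  -- multiple of u in W' : u = φ v
  set v : V := φ.symm ⟨u, huW⟩ with hv
  have hφv : ((φ v : W) : Fin n → ℤ) = u := by
    simp [hv]
  obtain ⟨l, hl, hlv⟩ := mult_mem hVfin v.2
  have hluW' : l • u ∈ W' := by
    have h1 : (⟨l • (v : Fin n → ℤ), hlv.1⟩ : V) = l • v := rfl
    have hz : φ (l • v) = l • φ v := AddMonoidHom.map_zsmul φ.toAddMonoidHom l v
    have := hagree _ hlv.1 hlv.2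
    rw [h1, hz] at this
    have h2 : l • u = ((φ' ⟨l • (v : Fin n → ℤ), hlv.2⟩ : W') : Fin n → ℤ) := by
      rw [← this, ← hφv]
      rfl
    rw [h2]; exact (φ' _).2
  have hkey : (m * l) • u ∈ V' ⊓ W' := by
    constructor
    · have : (m * l) • u = l • (m • u) := by rw [mul_comm, mul_smul]
      rw [this]; exact AddSubgroup.zsmul_mem _ hmu.2 l
    · rw [mul_smul]; exact AddSubgroup.zsmul_mem _ hluW' m
  have h3 : embQ n u = ((m * l : ℤ) : ℚ)⁻¹ • embQ n ((m * l) • u) := by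
    rw [embQ_zsmul, smul_smul, inv_mul_cancel₀ (by exact_mod_cast mul_ne_zero hm hl),
      one_smul]
  rw [h3]
  exact Submodule.smul_mem _ _ (Submodule.subset_span ⟨_, hkey, rfl⟩)

lemma dset_imp (hVfin : (V ⊓ V').relIndex V ≠ 0)
    (hagree : ∀ (v : Fin n → ℤ) (hv : v ∈ V) (hv' : v ∈ V'),
      ((φ ⟨v, hv⟩ : W) : Fin n → ℤ) = ((φ' ⟨v, hv'⟩ : W') : Fin n → ℤ)) :
    DSet V W φ ⊆ DSet V' W' φ' := by
  rintro x ⟨xs, h0, hspan, hrel⟩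
  exact ⟨xs, h0, fun k => span_imp hVfin hagree (hspan k),
    fun k => rel_imp hVfin hagree (hrel k)⟩

end aux

/-- Proposition 7.1(3): if `V` and `V'` are commensurable subgroups of `M` (i.e. `V ∩ V'`
has finite index in both `V` and `V'`) and the isomorphisms `φ : V → W`, `φ' : V' → W'`
agree on `V ∩ V'`, then `D_φ = D_{φ'}` and `φ̃ = φ̃'`. -/
theorem statement3 (n : ℕ) (V W V' W' : AddSubgroup (Fin n → ℤ))
    (φ : V ≃+ W) (φ' : V' ≃+ W')
    (hVfin : (V ⊓ V').relIndex V ≠ 0) (hV'fin : (V ⊓ V').relIndex V' ≠ 0)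
    (hagree : ∀ (v : Fin n → ℤ) (hv : v ∈ V) (hv' : v ∈ V'),
      ((φ ⟨v, hv⟩ : W) : Fin n → ℤ) = ((φ' ⟨v, hv'⟩ : W') : Fin n → ℤ)) :
    DSet V W φ = DSet V' W' φ' ∧
      ∀ x y : Fin n → ℚ, x ∈ DSet V W φ →
        (RelQ V W φ x y ↔ RelQ V' W' φ' x y) := by
  have hV'fin' : (V' ⊓ V).relIndex V' ≠ 0 := by rwa [inf_comm]
  have hagree' : ∀ (v : Fin n → ℤ) (hv' : v ∈ V') (hv : v ∈ V),
      ((φ' ⟨v, hv'⟩ : W') : Fin n → ℤ) = ((φ ⟨v, hv⟩ : W) : Fin n → ℤ) :=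
    fun v hv' hv => (hagree v hv hv').symm
  refine ⟨Set.Subset.antisymm (dset_imp hVfin hagree) (dset_imp hV'fin' hagree'),
    fun x y _ => ⟨rel_imp hVfin hagree, rel_imp hV'fin' hagree'⟩⟩
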